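/- Let c be a real number and λ1, λ2 > 0 real numbers. Then the 4×4 complex matrix I⊗I + c·(I⊗σ1) − λ1·(σ2⊗σ2) + λ2·(σ3⊗σ3) is positive semidefinite if and only if (λ1 + λ2)² + c² ≤ 1. -/

import Mathlib

open Matrix Kronecker ComplexOrder

noncomputable def σ1 : Matrix (Fin 2) (Fin 2) ℂ := !![0, 1; 1, 0]
noncomputable def σ2 : Matrix (Fin 2) (Fin 2) ℂ := !![0, -Complex.I; Complex.I, 0]
noncomputable def σ3 : Matrix (Fin 2) (Fin 2) ℂ := !![1, 0; 0, -1]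

lemma quad_aux (a c u v : ℝ) (h : a^2 + c^2 ≤ 1) :
    0 ≤ (1+a)*u^2 + (1-a)*v^2 + 2*c*u*v := by
  nlinarith [sq_nonneg (a*(2*u*v) - c*(u^2 - v^2)), sq_nonneg (u^2 + v^2 + a*(u^2-v^2) + 2*c*u*v),
    sq_nonneg (u+v), sq_nonneg (u-v), sq_nonneg (u^2+v^2)]

lemma herm_kron {A B : Matrix (Fin 2) (Fin 2) ℂ} (hA : A.IsHermitian) (hB : B.IsHermitian) :
    (A ⊗ₖ B).IsHermitian := by
  ext ⟨i1, i2⟩ ⟨j1, j2⟩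
  rw [Matrix.conjTranspose_apply, kroneckerMap_apply, kroneckerMap_apply, star_mul',
    show star (A j1 i1) = Aᴴ i1 j1 from rfl, show star (B j2 i2) = Bᴴ i2 j2 from rfl,
    hA.eq, hB.eq]

lemma herm_smul {n : Type*} {A : Matrix n n ℂ} (r : ℝ) (hA : A.IsHermitian) :
    ((r : ℂ) • A).IsHermitian := by
  rw [Matrix.IsHermitian, Matrix.conjTranspose_smul, hA.eq, Complex.star_def,
    Complex.conj_ofReal]

lemma herm_σ1 : σ1.IsHermitian := by
  ext i j; fin_cases i <;> fin_cases j <;> simp [σ1, Matrix.conjTranspose_apply]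

lemma herm_σ2 : σ2.IsHermitian := by
  ext i j; fin_cases i <;> fin_cases j <;> simp [σ2, Matrix.conjTranspose_apply]

lemma herm_σ3 : σ3.IsHermitian := by
  ext i j; fin_cases i <;> fin_cases j <;> simp [σ3, Matrix.conjTranspose_apply]

set_option maxHeartbeats 1600000 in
/-- for c real and lam1, lam2 > 0, the matrix
`I⊗I + c·(I⊗σ1) − lam1·(σ2⊗σ2) + lam2·(σ3⊗σ3)` is PSD iff (lam1+lam2)² + c² ≤ 1. -/
theorem stmt3 (c lam1 lam2 : ℝ) (h1 : 0 < lam1) (h2 : 0 < lam2) :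
    (((1 : Matrix (Fin 2) (Fin 2) ℂ) ⊗ₖ (1 : Matrix (Fin 2) (Fin 2) ℂ))
      + (c : ℂ) • ((1 : Matrix (Fin 2) (Fin 2) ℂ) ⊗ₖ σ1)
      - (lam1 : ℂ) • (σ2 ⊗ₖ σ2)
      + (lam2 : ℂ) • (σ3 ⊗ₖ σ3)).PosSemidef
    ↔ (lam1 + lam2) ^ 2 + c ^ 2 ≤ 1 := by
  constructor
  · intro hp
    set a := lam1 + lam2 with ha
    have key := hp.dotProduct_mulVec_nonneg (fun p => if p.1 = p.2 then (-(c:ℂ)) else ((1 + a : ℝ) : ℂ))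
    simp [dotProduct, mulVec, Fintype.sum_prod_type, Fin.sum_univ_two, Matrix.one_apply,
      σ1, σ2, σ3, Matrix.add_apply, Matrix.sub_apply, Matrix.smul_apply,
      kroneckerMap_apply] at key
    rw [Complex.le_def] at key
    obtain ⟨key1, -⟩ := key
    simp [Complex.add_re, Complex.mul_re, Complex.add_im, Complex.mul_im] at key1
    nlinarith [key1, h1, h2, sq_nonneg c]
  · intro h
    have h' : (lam2 - lam1)^2 + c^2 ≤ 1 := by nlinarith
    rw [Matrix.posSemidef_iff_dotProduct_mulVec]
    constructor
    · apply Matrix.IsHermitian.add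
      · apply Matrix.IsHermitian.sub
        · apply Matrix.IsHermitian.add
          · exact herm_kron Matrix.isHermitian_one Matrix.isHermitian_one
          · exact herm_smul c (herm_kron Matrix.isHermitian_one herm_σ1)
        · exact herm_smul lam1 (herm_kron herm_σ2 herm_σ2)
      · exact herm_smul lam2 (herm_kron herm_σ3 herm_σ3)
    · intro x
      simp [dotProduct, mulVec, Fintype.sum_prod_type, Fin.sum_univ_two, Matrix.one_apply,
        σ1, σ2, σ3, Matrix.add_apply, Matrix.sub_apply, Matrix.smul_apply, kroneckerMap_apply]
      rw [Complex.le_def]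
      constructor
      · simp [Complex.add_re, Complex.mul_re, Complex.add_im, Complex.mul_im]
        have A1 := quad_aux (lam1+lam2) c ((x (0,0)).re+(x (1,1)).re) ((x (0,1)).re+(x (1,0)).re) h
        have A2 := quad_aux (lam1+lam2) c ((x (0,0)).im+(x (1,1)).im) ((x (0,1)).im+(x (1,0)).im) h
        have A3 := quad_aux (lam2-lam1) c ((x (0,0)).re-(x (1,1)).re) ((x (0,1)).re-(x (1,0)).re) h'
        have A4 := quad_aux (lam2-lam1) c ((x (0,0)).im-(x (1,1)).im) ((x (0,1)).im-(x (1,0)).im) h'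
        nlinarith [A1, A2, A3, A4]
      · simp [Complex.add_im, Complex.mul_im, Complex.mul_re]
        ring
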